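/- Let y ∈ (ω)^ω and suppose (y)^k = ⋃_{i<ℓ} C_i is a 1-reduced coloring, i.e., the color of p ∈ (y)^k depends only on μ^p(1). Then there exist z ∈ (y)^ω and i < ℓ such that (z)^k ⊆ C_i. (The final pigeonhole step of the classical proof of CDRT^k_ℓ.) -/
import Mathlib


open Set

/-- `f : ℕ → ℕ` is ordered: a value `i` can occur only after all `j < i` have occurred. -/
def IsOrderedFn (f : ℕ → ℕ) : Prop :=
  ∀ n i, f n = i → ∀ j < i, ∃ m < n, f m = j

/-- `(ω)^k`: ordered surjections from `ω` onto `k`. -/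
def OmegaPart (k : ℕ) : Set (ℕ → ℕ) :=
  {f | IsOrderedFn f ∧ (∀ n, f n < k) ∧ ∀ i < k, ∃ n, f n = i}

/-- `(ω)^ω`: ordered surjections from `ω` onto `ω` (infinite partitions). -/
def OmegaPartInf : Set (ℕ → ℕ) :=
  {f | IsOrderedFn f ∧ Function.Surjective f}

/-- `(p)^k`: the `k`-coarsenings of `p`. -/
def Coarsenings (p : ℕ → ℕ) (k : ℕ) : Set (ℕ → ℕ) :=
  {q | q ∈ OmegaPart k ∧ ∀ n m, p n = p m → q n = q m}

/-- `(p)^ω`: the infinite coarsenings of `p`. -/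
def CoarseningsInf (p : ℕ → ℕ) : Set (ℕ → ℕ) :=
  {q | q ∈ OmegaPartInf ∧ ∀ n m, p n = p m → q n = q m}

/-- `μ^x(i)`: the least `n` with `x n = i`. -/
noncomputable def mu (x : ℕ → ℕ) (i : ℕ) : ℕ := sInf {n | x n = i}

/-- `x ↾ n` as a finite string. -/
def restrictList (x : ℕ → ℕ) (n : ℕ) : List ℕ := (List.range n).map x

/-- The basic (cylinder) set `[σ]` of functions extending the finite string `σ`. -/
def Cyl (σ : List ℕ) : Set (ℕ → ℕ) := {x | ∀ n < σ.length, x n = σ.getD n 0}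

/-- A finite string is ordered. -/
def ListOrdered (σ : List ℕ) : Prop :=
  ∀ n < σ.length, ∀ j < σ.getD n 0, ∃ m < n, σ.getD m 0 = j

/-- `(ω)^k_fin`: ordered finite strings over `k` in which all `i < k` appear. -/
def OmegaPartFin (k : ℕ) : Set (List ℕ) :=
  {σ | ListOrdered σ ∧ (∀ a ∈ σ, a < k) ∧ ∀ i < k, i ∈ σ}

/-- Composition `σ ∘ τ` of finite strings: `(σ ∘ τ)(n) = σ(τ(n))`. -/
def listComp (σ τ : List ℕ) : List ℕ := τ.map fun n => σ.getD n 0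

/-- `σ'` is a `k`-coarsening of the finite string `τ`. -/
def IsListCoarsening (k : ℕ) (σ' τ : List ℕ) : Prop :=
  σ' ∈ OmegaPartFin k ∧ σ'.length = τ.length ∧
    ∀ n < τ.length, ∀ m < τ.length,
      τ.getD n 0 = τ.getD m 0 → σ'.getD n 0 = σ'.getD m 0

/-- The open set coded by a set `W` of finite strings. -/
def OpenFrom (W : Set (List ℕ)) : Set (ℕ → ℕ) := {x | ∃ σ ∈ W, x ∈ Cyl σ}

/-- Codes for partial recursive functionals with an oracle. -/
inductive OracleCode : Type
  | oracle : OracleCode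
  | zero : OracleCode
  | succ : OracleCode
  | left : OracleCode
  | right : OracleCode
  | pair : OracleCode → OracleCode → OracleCode
  | comp : OracleCode → OracleCode → OracleCode
  | prec : OracleCode → OracleCode → OracleCode
  | rfind' : OracleCode → OracleCode

/-- Evaluation of an oracle code with oracle `g`. -/
def OracleCode.evalo (g : ℕ →. ℕ) : OracleCode → ℕ →. ℕ
  | .oracle => g
  | .zero => fun _ => Part.some 0
  | .succ => fun n => Part.some (n + 1)
  | .left => fun n => Part.some (Nat.unpair n).1
  | .right => fun n => Part.some (Nat.unpair n).2
  | .pair cf cg => fun n => Nat.pair <$> OracleCode.evalo g cf n <*> OracleCode.evalo g cg n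
  | .comp cf cg => fun n => OracleCode.evalo g cg n >>= OracleCode.evalo g cf
  | .prec cf cg =>
      Nat.unpaired fun a n =>
        n.rec (OracleCode.evalo g cf a) fun y IH => do
          let i ← IH
          OracleCode.evalo g cg (Nat.pair a (Nat.pair y i))
  | .rfind' cf =>
      Nat.unpaired fun a m =>
        (Nat.rfind fun n =>
            (fun x => decide (x = 0)) <$> OracleCode.evalo g cf (Nat.pair a (n + m))).map (· + m)

/-- View a total function as a partial function. -/
def toP (f : ℕ → ℕ) : ℕ →. ℕ := fun n => Part.some (f n)

/-- `f` is Turing reducible to `g`. -/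
def TuringReducibleFun (f g : ℕ → ℕ) : Prop :=
  ∃ c : OracleCode, c.evalo (toP g) = toP f

open Classical in
/-- Characteristic function of a set of naturals. -/
noncomputable def chi (A : Set ℕ) : ℕ → ℕ := fun n => if n ∈ A then 1 else 0

/-- A numbering of oracle codes. -/
def OracleCode.encodeC : OracleCode → ℕ
  | .oracle => 0
  | .zero => 1
  | .succ => 2
  | .left => 3
  | .right => 4
  | .pair a b => Nat.pair a.encodeC b.encodeC * 4 + 5
  | .comp a b => Nat.pair a.encodeC b.encodeC * 4 + 6
  | .prec a b => Nat.pair a.encodeC b.encodeC * 4 + 7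
  | .rfind' a => a.encodeC * 4 + 8

/-- The Turing jump of (the characteristic function) `g`. -/
def JumpSet (g : ℕ → ℕ) : Set ℕ :=
  {n | ∃ c : OracleCode, ∃ m, n = Nat.pair c.encodeC m ∧ (c.evalo (toP g) m).Dom}

/-- `∅^{(n)}`: the iterated Turing jump of the empty set. -/
noncomputable def EmptyIter : ℕ → Set ℕ
  | 0 => (∅ : Set ℕ)
  | n + 1 => JumpSet (chi (EmptyIter n))

/-- The clopen set coded by the leaf label `e`: `∅`, `univ`, `[τ_m]`, or its complement. -/
def leafSet (e : ℕ) : Set (ℕ → ℕ) :=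
  if e = 0 then ∅
  else if e = 1 then Set.univ
  else if e % 2 = 0 then Cyl (Denumerable.ofNat (List ℕ) (e / 2 - 1))
  else (Cyl (Denumerable.ofNat (List ℕ) (e / 2 - 1)))ᶜ

/-- Evaluation of a normal-form Borel code of height `m` (alternating ∃/∀ over the
labelling function `f` on tuples, `true` for Σ, `false` for Π). -/
def NFEval : ℕ → Bool → (List ℕ → ℕ) → (ℕ → ℕ) → Prop
  | 0, _, f, x => x ∈ leafSet (f [])
  | m + 1, true, f, x => ∃ t, NFEval m false (fun l => f (t :: l)) x
  | m + 1, false, f, x => ∀ t, NFEval m true (fun l => f (t :: l)) x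

section Stmt19Aux

lemma ordered_zero {y : ℕ → ℕ} (hy : IsOrderedFn y) : y 0 = 0 := by
  by_contra h
  obtain ⟨m, hm, -⟩ := hy 0 (y 0) rfl 0 (Nat.pos_of_ne_zero h)
  exact absurd hm (Nat.not_lt_zero m)

lemma mu_eq {x : ℕ → ℕ} {v N : ℕ} (hmem : x N = v) (hlb : ∀ n, x n = v → N ≤ n) :
    mu x v = N :=
  le_antisymm (Nat.sInf_le hmem) (le_csInf ⟨N, hmem⟩ hlb)

lemma mu_spec {y : ℕ → ℕ} (hy : Function.Surjective y) (a : ℕ) : y (mu y a) = a :=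
  Nat.sInf_mem (hy a)

lemma mu_le_of_ge {y : ℕ → ℕ} (hy : IsOrderedFn y) {a n : ℕ} (h : a ≤ y n) :
    mu y a ≤ n := by
  rcases eq_or_lt_of_le h with he | hl
  · exact Nat.sInf_le he.symm
  · obtain ⟨m, hm, hym⟩ := hy n (y n) rfl a hl
    have h1 : mu y a ≤ m := Nat.sInf_le hym
    omega

/-- The coarsening of `y` into `k` blocks whose block 1 starts at `μ^y(a)`. -/
def pfun (y : ℕ → ℕ) (k a : ℕ) : ℕ → ℕ :=
  fun n => if y n < a then 0 else min (y n - a + 1) (k - 1)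

lemma pfun_mem {y : ℕ → ℕ} {k a : ℕ} (hy : y ∈ OmegaPartInf) (hk : 2 ≤ k)
    (ha : 1 ≤ a) : pfun y k a ∈ Coarsenings y k := by
  obtain ⟨hyo, hys⟩ := hy
  have hy0 : y 0 = 0 := ordered_zero hyo
  have hp0 : pfun y k a 0 = 0 := by
    simp only [pfun, hy0]; rw [if_pos (by omega)]
  refine ⟨⟨?_, ?_, ?_⟩, ?_⟩
  · -- ordered
    intro n i hi j hj
    have hipos : 0 < i := lt_of_le_of_lt (Nat.zero_le j) hj
    have hyn : a ≤ y n := by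
      by_contra h
      simp [pfun, lt_of_not_ge h] at hi
      omega
    have hival : i = min (y n - a + 1) (k - 1) := by
      unfold pfun at hi
      rw [if_neg (not_lt_of_ge hyn)] at hi
      omega
    have hn0 : 0 < n := by
      rcases Nat.eq_zero_or_pos n with h | h
      · exfalso; rw [h, hp0] at hi; omega
      · exact h
    rcases Nat.eq_zero_or_pos j with hj0 | hjpos
    · exact ⟨0, hn0, by rw [hj0, hp0]⟩
    · -- target value a + j - 1
      have hlt : a + j - 1 < y n := by
        have h1 : i ≤ y n - a + 1 := by rw [hival]; exact min_le_left _ _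
        omega
      obtain ⟨m, hm, hym⟩ := hyo n (y n) rfl (a + j - 1) hlt
      refine ⟨m, hm, ?_⟩
      have hya : a ≤ y m := by omega
      have hik : i ≤ k - 1 := by rw [hival]; exact min_le_right _ _
      have hjk : j ≤ k - 1 := by omega
      have hyj : y m - a + 1 = j := by omega
      simp only [pfun, if_neg (not_lt_of_ge hya), hyj]
      exact min_eq_left hjk
  · -- bounded by k
    intro n
    unfold pfun
    split
    · omega
    · have : min (y n - a + 1) (k - 1) ≤ k - 1 := min_le_right _ _
      omega
  · -- surjective onto k
    intro i hi
    rcases Nat.eq_zero_or_pos i with h0 | hpos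
    · exact ⟨0, by rw [h0, hp0]⟩
    · obtain ⟨n, hn⟩ := hys (a + i - 1)
      refine ⟨n, ?_⟩
      have hya : a ≤ y n := by omega
      have hyi : y n - a + 1 = i := by omega
      simp only [pfun, if_neg (not_lt_of_ge hya), hyi]
      exact min_eq_left (by omega)
  · -- coarsening
    intro n m h
    simp [pfun, h]

lemma mu_pfun {y : ℕ → ℕ} {k a : ℕ} (hy : y ∈ OmegaPartInf) (hk : 2 ≤ k)
    (ha : 1 ≤ a) : mu (pfun y k a) 1 = mu y a := by
  obtain ⟨hyo, hys⟩ := hy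
  have hN : y (mu y a) = a := mu_spec hys a
  apply mu_eq
  · simp [pfun, hN]
    omega
  · intro n hn
    have hya : a ≤ y n := by
      by_contra h
      simp [pfun, lt_of_not_ge h] at hn
    exact mu_le_of_ge hyo hya

/-- The infinite coarsening of `y` determined by the strictly increasing sequence `s`
of block boundaries. -/
noncomputable def zfun (y s : ℕ → ℕ) : ℕ → ℕ := fun n => sInf {j | y n < s j}

section zfun
variable {y s : ℕ → ℕ}

lemma zfun_le {n j : ℕ} (h : j < zfun y s n) : s j ≤ y n := by
  by_contra hc
  have hj : j ∈ {j | y n < s j} := lt_of_not_ge hc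
  exact absurd (Nat.sInf_le hj) (not_le_of_gt h)

lemma zfun_val {n b : ℕ} (h1 : y n < s b) (h2 : ∀ j < b, s j ≤ y n) :
    zfun y s n = b :=
  le_antisymm (Nat.sInf_le h1)
    (le_csInf ⟨b, h1⟩ fun j hj => le_of_not_gt fun hlt => (h2 j hlt).not_gt hj)

lemma zfun_mem (hs : ∀ j, j < s j) (hsm : StrictMono s) (hy : y ∈ OmegaPartInf) : zfun y s ∈ CoarseningsInf y := by
  obtain ⟨hyo, hys⟩ := hy
  have hy0 : y 0 = 0 := ordered_zero hyo
  have hz0 : zfun y s 0 = 0 :=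
    zfun_val (by rw [hy0]; exact lt_of_lt_of_le (hs 0) (Nat.le_refl _))
      (fun j hj => absurd hj (Nat.not_lt_zero j))
  refine ⟨⟨?_, ?_⟩, ?_⟩
  · -- ordered
    intro n i hi j hj
    subst hi
    rcases Nat.eq_zero_or_pos j with hj0 | hjpos
    · -- j = 0 : use value 0
      have hsn : s j ≤ y n := zfun_le hj
      have hyn : 0 < y n := lt_of_lt_of_le (lt_of_le_of_lt (Nat.zero_le j) (hs j)) hsn
      have hn0 : 0 < n := by
        rcases Nat.eq_zero_or_pos n with h | h
        · exfalso; rw [h, hy0] at hyn; omega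
        · exact h
      exact ⟨0, hn0, by rw [hz0, hj0]⟩
    · -- j ≥ 1 : use value s (j-1)
      have hsj : s j ≤ y n := zfun_le hj
      have hlt : s (j - 1) < y n :=
        lt_of_lt_of_le (hsm (by omega : j - 1 < j)) hsj
      obtain ⟨m, hm, hym⟩ := hyo n (y n) rfl (s (j - 1)) hlt
      refine ⟨m, hm, zfun_val ?_ ?_⟩
      · rw [hym]; exact hsm (by omega)
      · intro j' hj'
        rw [hym]
        exact hsm.monotone (by omega)
  · -- surjective
    intro b
    rcases Nat.eq_zero_or_pos b with h0 | hpos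
    · exact ⟨0, h0 ▸ hz0⟩
    · obtain ⟨n, hn⟩ := hys (s (b - 1))
      refine ⟨n, zfun_val ?_ ?_⟩
      · rw [hn]; exact hsm (by omega)
      · intro j hj
        rw [hn]
        exact hsm.monotone (by omega)
  · -- coarsening
    intro n m h
    simp [zfun, h]

lemma mu_zfun (hs : ∀ j, j < s j) (hsm : StrictMono s) (hy : y ∈ OmegaPartInf) (b : ℕ) :
    mu (zfun y s) (b + 1) = mu y (s b) := by
  obtain ⟨hyo, hys⟩ := hy
  apply mu_eq
  · refine zfun_val ?_ ?_
    · rw [mu_spec hys]; exact hsm (Nat.lt_succ_self b)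
    · intro j hj
      rw [mu_spec hys]
      exact hsm.monotone (by omega)
  · intro n hn
    have : s b ≤ y n := zfun_le (hn ▸ Nat.lt_succ_self b)
    exact mu_le_of_ge hyo this

end zfun

end Stmt19Aux

/-- the pigeonhole step — a 1-reduced coloring of `(y)^k` has a
homogeneous infinite coarsening of `y`. -/
theorem stmt19 (k ℓ : ℕ) (hk : 2 ≤ k) (hℓ : 2 ≤ ℓ)
    (y : ℕ → ℕ) (hy : y ∈ OmegaPartInf)
    (C : Fin ℓ → Set (ℕ → ℕ))
    (hcover : Coarsenings y k = ⋃ i, C i)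
    (hred : ∀ p ∈ Coarsenings y k, ∀ q ∈ Coarsenings y k,
      mu p 1 = mu q 1 → ∀ i, p ∈ C i ↔ q ∈ C i) :
    ∃ z ∈ CoarseningsInf y, ∃ i : Fin ℓ, Coarsenings z k ⊆ C i := by
  classical
  -- choose a color for each a
  have hcol : ∀ a : ℕ, ∃ i : Fin ℓ, pfun y k (a + 1) ∈ C i := by
    intro a
    have hp : pfun y k (a + 1) ∈ Coarsenings y k := pfun_mem hy hk (by omega)
    rw [hcover] at hp
    exact Set.mem_iUnion.mp hp
  choose c hc using hcol
  -- pigeonhole: some color has infinite fiber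
  obtain ⟨i, hi⟩ := Finite.exists_infinite_fiber c
  have hPinf : {a : ℕ | c a = i}.Infinite := by
    have h2 : (c ⁻¹' {i}).Infinite := (Set.infinite_coe_iff (s := c ⁻¹' {i})).mp hi
    exact h2
  set P : ℕ → Prop := fun a => c a = i with hP
  have hPinf' : (setOf P).Infinite := hPinf
  set s : ℕ → ℕ := fun j => Nat.nth P j + 1 with hsdef
  have hsm : StrictMono s := fun a b hab => by
    have h := (Nat.nth_lt_nth hPinf').mpr hab
    show Nat.nth P a + 1 < Nat.nth P b + 1
    omega
  have hs : ∀ j, j < s j := by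
    intro j
    have h : j ≤ Nat.nth P j := Nat.le_nth (fun h => absurd h hPinf')
    show j < Nat.nth P j + 1
    omega
  refine ⟨zfun y s, zfun_mem hs hsm hy, i, ?_⟩
  intro q hq
  obtain ⟨⟨hqo, hqk, hqs⟩, hqc⟩ := hq
  have hzc : ∀ n m, y n = y m → zfun y s n = zfun y s m := (zfun_mem hs hsm hy).2
  have hq' : q ∈ Coarsenings y k :=
    ⟨⟨hqo, hqk, hqs⟩, fun n m h => hqc n m (hzc n m h)⟩
  -- μ^q(1)
  obtain ⟨n1, hn1⟩ := hqs 1 (by omega)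
  have hne : {n | q n = 1}.Nonempty := ⟨n1, hn1⟩
  have hq1 : q (mu q 1) = 1 := Nat.sInf_mem hne
  set n0 := mu q 1 with hn0
  have hq0 : q 0 = 0 := ordered_zero hqo
  have hz0 : zfun y s 0 = 0 := by
    refine zfun_val ?_ (fun j hj => absurd hj (Nat.not_lt_zero j))
    rw [ordered_zero hy.1]
    exact lt_of_le_of_lt (Nat.zero_le _) (hs 0)
  have hzn0 : 0 < zfun y s n0 := by
    rcases Nat.eq_zero_or_pos (zfun y s n0) with h | h
    · exfalso
      have : q n0 = q 0 := hqc n0 0 (by rw [h, hz0])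
      rw [hq1, hq0] at this; exact one_ne_zero this
    · exact h
  set b := zfun y s n0 - 1 with hb
  have hzb : zfun y s n0 = b + 1 := by omega
  -- μ^q(1) = μ^z(b+1)
  have hmu1 : mu (zfun y s) (b + 1) = n0 := by
    refine mu_eq hzb ?_
    intro n hn
    have hqq : q n = q n0 := hqc n n0 (by rw [hn, hzb])
    rw [hq1] at hqq
    exact Nat.sInf_le hqq
  have hmu2 : mu (zfun y s) (b + 1) = mu y (s b) := mu_zfun hs hsm hy b
  have hmupf : mu (pfun y k (Nat.nth P b + 1)) 1 = mu y (s b) :=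
    mu_pfun hy hk (by omega)
  have hmuq : mu q 1 = mu (pfun y k (Nat.nth P b + 1)) 1 := by
    rw [hmupf, ← hmu2, hmu1]
  have hci : c (Nat.nth P b) = i := Nat.nth_mem_of_infinite hPinf' b
  have hpC : pfun y k (Nat.nth P b + 1) ∈ C i := hci ▸ hc (Nat.nth P b)
  exact (hred q hq' _ (pfun_mem hy hk (by omega)) hmuq i).mpr hpC
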